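/- For every real number t with 0 < t ≤ 1 and every λ ∈ [0,1], we have (1-λ)t + λ - t^{1-λ} ≤ λ(1-λ)(log t)². -/

import Mathlib

open Real

lemma stmt_5_key (μ : ℝ) (hμ0 : 0 ≤ μ) (hμ1 : μ ≤ 1) :
    ∀ s ≤ (0:ℝ), μ * Real.exp s + (1 - μ) - Real.exp (μ * s) - (1 - μ) * μ * s ^ 2 ≤ 0 := by
  set g : ℝ → ℝ := fun s => μ * Real.exp s + (1 - μ) - Real.exp (μ * s) - (1 - μ) * μ * s ^ 2
    with hg
  have hderiv : ∀ s : ℝ,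
      HasDerivAt g (μ * Real.exp s - Real.exp (μ * s) * μ - (1 - μ) * μ * (2 * s)) s := by
    intro s
    have h1 : HasDerivAt (fun s : ℝ => μ * Real.exp s) (μ * Real.exp s) s :=
      (Real.hasDerivAt_exp s).const_mul μ
    have h2 : HasDerivAt (fun s : ℝ => Real.exp (μ * s)) (Real.exp (μ * s) * μ) s := by
      have := (Real.hasDerivAt_exp (μ * s)).comp s ((hasDerivAt_id s).const_mul μ)
      simpa [Function.comp_def] using this
    have h3 : HasDerivAt (fun s : ℝ => (1 - μ) * μ * s ^ 2) ((1 - μ) * μ * (2 * s)) s := by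
      have := (hasDerivAt_pow 2 s).const_mul ((1 - μ) * μ)
      simpa [mul_assoc] using this
    have := ((h1.add_const (1 - μ)).sub h2).sub h3
    exact this
  have hmono : MonotoneOn g (Set.Iic (0:ℝ)) := by
    apply monotoneOn_of_deriv_nonneg (convex_Iic 0)
    · exact Continuous.continuousOn (by fun_prop)
    · intro s hs
      exact (hderiv s).differentiableAt.differentiableWithinAt
    · intro s hs
      rw [(hderiv s).deriv]
      simp only [interior_Iic, Set.mem_Iio] at hs
      have hs' : s ≤ 0 := hs.le
      have hms : μ * s ≤ 0 := mul_nonpos_of_nonneg_of_nonpos hμ0 hs'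
      have he1 : Real.exp (μ * s) ≤ 1 := Real.exp_le_one_iff.mpr hms
      have he2 : 1 + (s - μ * s) ≤ Real.exp (s - μ * s) := by
        linarith [Real.add_one_le_exp (s - μ * s)]
      have he3 : Real.exp s = Real.exp (μ * s) * Real.exp (s - μ * s) := by
        rw [← Real.exp_add]; ring_nf
      have hp1 : (0:ℝ) < Real.exp (μ * s) := Real.exp_pos _
      have hkey : Real.exp (μ * s) * (1 + (s - μ * s)) ≤ Real.exp s := by
        calc Real.exp (μ * s) * (1 + (s - μ * s)) ≤ Real.exp (μ * s) * Real.exp (s - μ * s) :=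
              mul_le_mul_of_nonneg_left he2 hp1.le
          _ = Real.exp s := he3.symm
      have hnn : 0 ≤ μ * (1 - μ) * (-s) :=
        mul_nonneg (mul_nonneg hμ0 (by linarith)) (by linarith)
      have hkey2 : Real.exp (μ * s) * (μ * (1 - μ) * (-s)) ≤ μ * (1 - μ) * (-s) := by
        nlinarith
      nlinarith [mul_le_mul_of_nonneg_left hkey hμ0]
  intro s hs
  have h := hmono (Set.mem_Iic.mpr hs) (Set.mem_Iic.mpr le_rfl) hs
  have hg0 : g 0 = 0 := by simp [hg]
  have hgs : g s = μ * Real.exp s + (1 - μ) - Real.exp (μ * s) - (1 - μ) * μ * s ^ 2 := rfl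
  linarith [h, hg0.le]

/-- For every real `t` with `0 < t ≤ 1` and every `λ ∈ [0,1]`:
`(1-λ)t + λ - t^(1-λ) ≤ λ(1-λ)(log t)²`. -/
theorem stmt_5 (t lam : ℝ) (ht0 : 0 < t) (ht1 : t ≤ 1) (hlam : lam ∈ Set.Icc (0 : ℝ) 1) :
    (1 - lam) * t + lam - t ^ (1 - lam) ≤ lam * (1 - lam) * (Real.log t) ^ 2 := by
  obtain ⟨hl0, hl1⟩ := hlam
  have hs : Real.log t ≤ 0 := Real.log_nonpos ht0.le ht1
  have hrpow : t ^ (1 - lam) = Real.exp ((1 - lam) * Real.log t) := by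
    rw [Real.rpow_def_of_pos ht0, mul_comm]
  have hexp : Real.exp (Real.log t) = t := Real.exp_log ht0
  have := stmt_5_key (1 - lam) (by linarith) (by linarith) (Real.log t) hs
  rw [hrpow]
  nlinarith [this, hexp]
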